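/- Fix ξ ∈ ∂Δⁿ and set x_ν = (1 − 1/ν)^{1/2} ξ for ν ≥ 1. Then for every z ∈ Δⁿ, the limit as ν → ∞ of max_{j : |ξ_j| = 1} { min_h { (1 − |x_{ν,h}|²)/(1 − |x_{ν,j}|²) } · |1 − conj(z_j) x_{ν,j}|²/(1 − |z_j|²) } exists and equals max_{j : |ξ_j| = 1} |ξ_j − z_j|²/(1 − |z_j|²). -/

import Mathlib

open scoped ComplexConjugate

/-- For `ξ ∈ ∂Δⁿ` and `x_ν = (1 - 1/ν)^{1/2} ξ`, for every `z ∈ Δⁿ` the limit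
as `ν → ∞` of
`max_{j : |ξ_j|=1} { min_h {(1-|x_{ν,h}|²)/(1-|x_{ν,j}|²)} · |1-conj(z_j)x_{ν,j}|²/(1-|z_j|²) }`
exists and equals `max_{j : |ξ_j|=1} |ξ_j - z_j|²/(1-|z_j|²)`; thus `{x_ν}` is
a horosphere sequence at `ξ`. -/
theorem polydisk_horosphere_sequence {n : ℕ} (hn : 0 < n) {ξ : Fin n → ℂ}
    (hξ : ξ ∈ frontier {z : Fin n → ℂ | ‖z‖ < 1})
    {z : Fin n → ℂ} (hz : z ∈ {z : Fin n → ℂ | ‖z‖ < 1}) :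
    Filter.Tendsto
      (fun ν : ℕ =>
        ⨆ j : {j : Fin n // ‖ξ j‖ = 1},
          (⨅ h : Fin n,
              (1 - ‖(Real.sqrt (1 - 1/(ν:ℝ)) : ℂ) * ξ h‖ ^ 2) /
                (1 - ‖(Real.sqrt (1 - 1/(ν:ℝ)) : ℂ) * ξ j.1‖ ^ 2)) *
            ‖1 - conj (z j.1) *
                ((Real.sqrt (1 - 1/(ν:ℝ)) : ℂ) * ξ j.1)‖ ^ 2 /
              (1 - ‖z j.1‖ ^ 2))
      Filter.atTop
      (nhds (⨆ j : {j : Fin n // ‖ξ j‖ = 1},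
        ‖ξ j.1 - z j.1‖ ^ 2 / (1 - ‖z j.1‖ ^ 2))) := by
  classical
  haveI : Nonempty (Fin n) := ⟨⟨0, hn⟩⟩
  have hball : {w : Fin n → ℂ | ‖w‖ < 1} = Metric.ball (0 : Fin n → ℂ) 1 := by
    ext w; simp [Metric.mem_ball, dist_zero_right]
  have hξn : ‖ξ‖ = 1 := by
    have h1 := hξ
    rw [hball, frontier_ball _ one_ne_zero] at h1
    simpa [dist_zero_right] using h1
  have hle : ∀ h : Fin n, ‖ξ h‖ ≤ 1 := fun h => by
    have := norm_le_pi_norm ξ h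
    simpa [hξn] using this
  obtain ⟨j₀, hj₀⟩ : ∃ j, ‖ξ j‖ = 1 := by
    obtain ⟨j, -, hj⟩ := Finset.exists_mem_eq_sup (Finset.univ : Finset (Fin n))
      Finset.univ_nonempty (fun i => ‖ξ i‖₊)
    refine ⟨j, ?_⟩
    have h1 : ‖ξ‖₊ = ‖ξ j‖₊ := by rw [Pi.nnnorm_def]; exact hj
    have h2 : ‖ξ j‖ = 1 := by
      have := congrArg (fun x : NNReal => (x : ℝ)) h1
      simp only [coe_nnnorm] at this
      rw [← this, hξn]
    simpa using h2
  haveI hS : Nonempty {j : Fin n // ‖ξ j‖ = 1} := ⟨⟨j₀, hj₀⟩⟩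
  -- the inner infimum equals 1 for ν ≥ 1
  have hinf : ∀ ν : ℕ, 1 ≤ ν → ∀ j : {j : Fin n // ‖ξ j‖ = 1},
      (⨅ h : Fin n,
          (1 - ‖(Real.sqrt (1 - 1/(ν:ℝ)) : ℂ) * ξ h‖ ^ 2) /
            (1 - ‖(Real.sqrt (1 - 1/(ν:ℝ)) : ℂ) * ξ j.1‖ ^ 2)) = 1 := by
    intro ν hν j
    have hν' : (0:ℝ) < ν := by exact_mod_cast hν
    have h1ν : 1/(ν:ℝ) ≤ 1 := by
      rw [div_le_one hν']; exact_mod_cast hν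
    have hnn : (0:ℝ) ≤ 1 - 1/(ν:ℝ) := by linarith
    have habs : ∀ w : ℂ, ‖(Real.sqrt (1 - 1/(ν:ℝ)) : ℂ) * w‖ ^ 2
        = (1 - 1/(ν:ℝ)) * ‖w‖ ^ 2 := by
      intro w
      rw [norm_mul, mul_pow, Complex.norm_of_nonneg (Real.sqrt_nonneg _),
        Real.sq_sqrt hnn]
    have hden : (1 - ‖(Real.sqrt (1 - 1/(ν:ℝ)) : ℂ) * ξ j.1‖ ^ 2) = 1/(ν:ℝ) := by
      rw [habs, j.2]; ring
    have hpos : (0:ℝ) < 1/(ν:ℝ) := by positivity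
    have hterm : ∀ h : Fin n, (1:ℝ) ≤
        (1 - ‖(Real.sqrt (1 - 1/(ν:ℝ)) : ℂ) * ξ h‖ ^ 2) /
          (1 - ‖(Real.sqrt (1 - 1/(ν:ℝ)) : ℂ) * ξ j.1‖ ^ 2) := by
      intro h
      rw [hden, habs, le_div_iff₀ hpos]
      have h2 : ‖ξ h‖ ^ 2 ≤ 1 :=
        pow_le_one₀ (norm_nonneg _) (hle h)
      nlinarith
    refine le_antisymm ?_ (le_ciInf hterm)
    refine ciInf_le_of_le (Finite.bddBelow_range _) j.1 ?_
    rw [hden, div_self hpos.ne']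
  -- tendsto of the simplified function
  have hsqrt : Filter.Tendsto (fun ν : ℕ => Real.sqrt (1 - 1/(ν:ℝ)))
      Filter.atTop (nhds 1) := by
    have h1 : Filter.Tendsto (fun ν : ℕ => 1 - 1/(ν:ℝ)) Filter.atTop (nhds 1) := by
      simpa using (tendsto_const_nhds (x := (1:ℝ))).sub tendsto_one_div_atTop_nhds_zero_nat
    have := (Real.continuous_sqrt.tendsto 1).comp h1
    simpa [Function.comp_def] using this
  have hterm_tendsto : ∀ j : {j : Fin n // ‖ξ j‖ = 1},
      Filter.Tendsto (fun ν : ℕ =>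
        ‖1 - conj (z j.1) * ((Real.sqrt (1 - 1/(ν:ℝ)) : ℂ) * ξ j.1)‖ ^ 2 /
          (1 - ‖z j.1‖ ^ 2)) Filter.atTop
        (nhds (‖ξ j.1 - z j.1‖ ^ 2 / (1 - ‖z j.1‖ ^ 2))) := by
    intro j
    have hcont : Continuous (fun t : ℝ =>
        ‖1 - conj (z j.1) * ((t:ℂ) * ξ j.1)‖ ^ 2 /
          (1 - ‖z j.1‖ ^ 2)) := by
      apply Continuous.div_const
      apply Continuous.pow
      exact continuous_norm.comp (by continuity)
    have := (hcont.tendsto 1).comp hsqrt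
    have habseq : ‖1 - conj (z j.1) * ξ j.1‖
        = ‖ξ j.1 - z j.1‖ := by
      have hns : (starRingEnd ℂ) (ξ j.1) * ξ j.1 = 1 := by
        rw [mul_comm, Complex.mul_conj, Complex.normSq_eq_norm_sq, j.2]
        norm_num
      have key : 1 - conj (z j.1) * ξ j.1 = (starRingEnd ℂ) (ξ j.1 - z j.1) * ξ j.1 := by
        rw [map_sub, sub_mul, hns]
      rw [key, norm_mul, Complex.norm_conj, j.2, mul_one]
    simpa [Function.comp_def, habseq, one_div] using this
  have main : Filter.Tendsto (fun ν : ℕ =>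
      ⨆ j : {j : Fin n // ‖ξ j‖ = 1},
        ‖1 - conj (z j.1) * ((Real.sqrt (1 - 1/(ν:ℝ)) : ℂ) * ξ j.1)‖ ^ 2 /
          (1 - ‖z j.1‖ ^ 2)) Filter.atTop
      (nhds (⨆ j : {j : Fin n // ‖ξ j‖ = 1},
        ‖ξ j.1 - z j.1‖ ^ 2 / (1 - ‖z j.1‖ ^ 2))) := by
    rw [← Finset.sup'_univ_eq_ciSup]
    refine Filter.Tendsto.congr (fun ν => ?_)
      (Filter.Tendsto.finset_sup'_nhds_apply Finset.univ_nonempty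
        (fun j _ => hterm_tendsto j))
    exact Finset.sup'_univ_eq_ciSup _
  refine main.congr' ?_
  filter_upwards [Filter.eventually_ge_atTop 1] with ν hν
  exact iSup_congr fun j => by rw [hinf ν hν j, one_mul]
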